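/- Let X be a Hausdorff topological space and M ⊆ C(X) a family of real-valued continuous functions on X. Then the following are equivalent: (1) the evaluation map ⨂M : X → ⨂M(X) ⊆ ℝ^M is a homeomorphism onto its image; (2) M strongly separates points on X; (3) M determines point convergence on X (for every net (x_λ) and p ∈ X, if g(x_λ) → g(p) for every g ∈ M then x_λ → p). Each of (1)–(3) implies (4): M determines sequential point convergence on X (the same implication for sequences). If M is countable, then (1)–(4) are all equivalent. -/

import Mathlib

open Set Filter Topology

/-- A family `M` strongly separates points on the topological space `X`. -/
def SSepPts {X : Type*} [TopologicalSpace X] (M : Set (X → ℝ)) : Prop :=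
  ∀ (x : X) (O : Set X), IsOpen O → x ∈ O →
    ∃ (k : ℕ) (g : Fin k → X → ℝ), (∀ i, g i ∈ M) ∧
      ∃ ε > (0 : ℝ), ∀ y, y ∉ O → ∃ i, ε ≤ |g i y - g i x|

/-- `M` determines point convergence on `X` (expressed via filters, equivalently
nets): if `g(x_λ) → g(p)` for every `g ∈ M` then `x_λ → p`. -/
def DeterminesPtConv {X : Type*} [TopologicalSpace X] (M : Set (X → ℝ)) : Prop :=
  ∀ (F : Filter X) (p : X), (∀ g ∈ M, Filter.Tendsto g F (𝓝 (g p))) → F ≤ 𝓝 p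

/-- `M` determines sequential point convergence on `X`. -/
def DeterminesSeqConv {X : Type*} [TopologicalSpace X] (M : Set (X → ℝ)) : Prop :=
  ∀ (x : ℕ → X) (p : X),
    (∀ g ∈ M, Filter.Tendsto (fun n => g (x n)) Filter.atTop (𝓝 (g p))) →
    Filter.Tendsto x Filter.atTop (𝓝 p)

/-- For a Hausdorff space `X` and `M ⊆ C(X)`:
(1) the evaluation map `⨂M` is a homeomorphism onto its image (an embedding),
(2) `M` strongly separates points, and (3) `M` determines point convergence,
are all equivalent, and each implies (4) `M` determines sequential point
convergence; if `M` is countable, (4) is equivalent to them as well. -/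
theorem sep_to_conv' {X : Type*} [TopologicalSpace X] {M : Set (X → ℝ)}
    (h : SSepPts M) : DeterminesPtConv M := by
  intro F p hF U hU
  rcases mem_nhds_iff.mp hU with ⟨O, hOU, hO, hpO⟩
  rcases h p O hO hpO with ⟨k, g, hg, ε, hε, hsep⟩
  have hmem : (⋂ i : Fin k, {y | |g i y - g i p| < ε}) ∈ F := by
    rw [Filter.iInter_mem]
    intro i
    have := (hF (g i) (hg i)) (Metric.ball_mem_nhds (g i p) hε)
    simpa [Real.dist_eq, Metric.ball, Set.preimage] using this
  refine mem_of_superset hmem fun y hy => hOU ?_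
  by_contra hyO
  rcases hsep y hyO with ⟨i, hi⟩
  have := mem_iInter.mp hy i
  simp only [mem_setOf_eq] at this
  linarith

theorem conv_to_emb' {X : Type*} [TopologicalSpace X] [T1Space X] {M : Set (X → ℝ)}
    (hMc : ∀ g ∈ M, Continuous g) (h : DeterminesPtConv M) :
    IsEmbedding (fun x (g : M) => (g : X → ℝ) x) := by
  set e : X → (M → ℝ) := fun x (g : M) => (g : X → ℝ) x with he
  have hcont : Continuous e := continuous_pi fun g => hMc g g.2
  refine ⟨isInducing_iff_nhds.mpr fun x => le_antisymm ?_ ?_, ?_⟩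
  · exact (Filter.tendsto_iff_comap).mp (hcont.tendsto x)
  · refine h (comap e (𝓝 (e x))) x fun g hg => ?_
    exact ((continuous_apply (⟨g, hg⟩ : M)).tendsto (e x)).comp tendsto_comap
  · intro x y hxy
    have hpure : pure x ≤ 𝓝 y := by
      refine h (pure x) y fun g hg => ?_
      have : g x = g y := congrFun hxy ⟨g, hg⟩
      rw [← this]
      exact tendsto_pure_nhds g x
    exact specializes_iff_eq.mp (specializes_iff_pure.mpr hpure)

theorem emb_to_sep' {X : Type*} [TopologicalSpace X] {M : Set (X → ℝ)}
    (h : IsEmbedding (fun x (g : M) => (g : X → ℝ) x)) : SSepPts M := by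
  set e : X → (M → ℝ) := fun x (g : M) => (g : X → ℝ) x with he
  intro x O hO hxO
  have hnh : O ∈ comap e (𝓝 (e x)) := by
    rw [← h.toIsInducing.nhds_eq_comap]
    exact hO.mem_nhds hxO
  rcases hnh with ⟨U, hU, hUO⟩
  rw [nhds_pi, Filter.mem_pi'] at hU
  rcases hU with ⟨I, t, ht, htU⟩
  have hδ : ∀ i : M, ∃ δ > (0:ℝ), Metric.ball (e x i) δ ⊆ t i := fun i =>
    Metric.mem_nhds_iff.mp (ht i)
  choose δ hδpos hδball using hδ
  refine ⟨I.card, fun j => ((I.equivFin.symm j : M) : X → ℝ), fun j => (I.equivFin.symm j : M).2,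
    if hI : I.Nonempty then I.inf' hI δ else 1, ?_, ?_⟩
  · split_ifs with hI
    · exact (Finset.lt_inf'_iff hI).mpr fun i _ => hδpos i
    · norm_num
  · intro y hyO
    have heyU : e y ∉ U := fun hmem => hyO (hUO hmem)
    have : e y ∉ Set.pi ↑I t := fun hmem => heyU (htU hmem)
    rw [Set.mem_pi] at this
    push_neg at this
    rcases this with ⟨i, hiI, hti⟩
    have hI : I.Nonempty := ⟨i, hiI⟩
    refine ⟨I.equivFin ⟨i, hiI⟩, ?_⟩
    have hball : e y i ∉ Metric.ball (e x i) (δ i) := fun hb => hti (hδball i hb)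
    rw [Metric.mem_ball, Real.dist_eq, not_lt] at hball
    simp only [Equiv.symm_apply_apply, dif_pos hI]
    exact le_trans (Finset.inf'_le δ hiI) hball

theorem seq_to_conv' {X : Type*} [TopologicalSpace X] {M : Set (X → ℝ)}
    (hMcount : M.Countable) (h : DeterminesSeqConv M) : DeterminesPtConv M := by
  intro F p hF
  set e : X → (M → ℝ) := fun x (g : M) => (g : X → ℝ) x with he
  have : Countable M := hMcount.to_subtype
  have hFe : F ≤ comap e (𝓝 (e p)) := by
    rw [← Filter.tendsto_iff_comap, tendsto_pi_nhds]
    exact fun g => hF g g.2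
  refine hFe.trans ?_
  by_contra hc
  rw [Filter.le_def] at hc
  push_neg at hc
  rcases hc with ⟨U, hU, hUF⟩
  obtain ⟨s, hs⟩ := (comap e (𝓝 (e p))).exists_antitone_basis
  have hns : ∀ n, ¬ s n ⊆ U := fun n hsub =>
    hUF (mem_of_superset (hs.toHasBasis.mem_of_mem trivial) hsub)
  have hy : ∀ n, ∃ z, z ∈ s n ∧ z ∉ U := fun n => Set.not_subset.mp (hns n)
  choose y hy1 hy2 using hy
  have hty : Tendsto y atTop (comap e (𝓝 (e p))) := hs.tendsto hy1
  have hconv : Tendsto y atTop (𝓝 p) := by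
    refine h y p fun g hg => ?_
    exact ((continuous_apply (⟨g, hg⟩ : M)).tendsto (e p)).comp (tendsto_comap.comp hty)
  have hev : ∀ᶠ n in atTop, y n ∈ U := hconv hU
  rcases hev.exists with ⟨n, hn⟩
  exact hy2 n hn

theorem stmt10 {X : Type*} [TopologicalSpace X] [T2Space X]
    (M : Set (X → ℝ)) (hMc : ∀ g ∈ M, Continuous g) :
    (IsEmbedding (fun x (g : M) => (g : X → ℝ) x) ↔ SSepPts M) ∧
    (SSepPts M ↔ DeterminesPtConv M) ∧
    (DeterminesPtConv M → DeterminesSeqConv M) ∧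
    (M.Countable →
      (DeterminesSeqConv M → IsEmbedding (fun x (g : M) => (g : X → ℝ) x))) := by

  have h31 := conv_to_emb' hMc
  refine ⟨⟨emb_to_sep', fun h => h31 (sep_to_conv' h)⟩,
    ⟨sep_to_conv', fun h => emb_to_sep' (h31 h)⟩, ?_, ?_⟩
  · intro h x p hx
    exact h (map x atTop) p fun g hg => Filter.tendsto_map'_iff.mpr (hx g hg)
  · intro hcount hseq
    exact h31 (seq_to_conv' hcount hseq)
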